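/- Pointwise on the underlying probability space, for every index j' with 0 ≤ j' ≤ T−1, b_{j'} ≠ 0 and j'/T ≤ 1/2, one has |ỹ(j'/T)| ≥ |b_{j'}| − π·B·U₂ − sup_{v∈[0,1/2]} |ε̃(v)|. -/

import Mathlib

open MeasureTheory ProbabilityTheory Complex Real

/-- `A_m := sup{ |sin(πν)|/(πν) : ν ∈ [m, m+1] }`. -/
noncomputable def sideLobeBound (m : ℕ) : ℝ :=
  ⨆ ν ∈ Set.Icc (m : ℝ) ((m : ℝ) + 1), |Real.sin (Real.pi * ν)| / (Real.pi * ν)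

/-- `U₂ := Σ_{j=1}^{⌊(n−1)/(4g)⌋} A_{2jg−1}`. -/
noncomputable def leakageU₂ (n g : ℕ) : ℝ :=
  ∑ j ∈ Finset.Icc (1 : ℤ) ⌊((n : ℝ) - 1) / (4 * g)⌋,
    sideLobeBound ((2 * j).toNat * g - 1)

-- L1: |e^{ix} - 1| = 2|sin(x/2)|
lemma abs_exp_mul_I_sub_one (x : ℝ) :
    ‖Complex.exp (x * Complex.I) - 1‖ = 2 * |Real.sin (x / 2)| := by
  have h := Complex.sq_norm (Complex.exp (x * Complex.I) - 1)
  have hexp : Complex.exp (↑x * Complex.I) = (Real.cos x : ℂ) + (Real.sin x : ℂ) * Complex.I := by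
    rw [Complex.exp_mul_I]
    push_cast [Complex.ofReal_cos, Complex.ofReal_sin]
    ring
  have hns : Complex.normSq (Complex.exp (x * Complex.I) - 1)
      = (Real.cos x - 1) ^ 2 + Real.sin x ^ 2 := by
    rw [hexp]
    have : (Real.cos x : ℂ) + (Real.sin x : ℂ) * Complex.I - 1
        = ((Real.cos x - 1 : ℝ) : ℂ) + ((Real.sin x : ℝ) : ℂ) * Complex.I := by
      push_cast; ring
    rw [this, Complex.normSq_add_mul_I]
  have hcos : Real.cos x = 1 - 2 * Real.sin (x / 2) ^ 2 := by
    have h2 : Real.cos (2 * (x / 2)) = 1 - 2 * Real.sin (x / 2) ^ 2 := by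
      rw [Real.cos_two_mul]
      nlinarith [Real.sin_sq_add_cos_sq (x / 2)]
    have h3 : 2 * (x / 2) = x := by ring
    rwa [h3] at h2
  have hsq : (‖Complex.exp (x * Complex.I) - 1‖) ^ 2
      = (2 * |Real.sin (x / 2)|) ^ 2 := by
    rw [h, hns]
    have := Real.sin_sq_add_cos_sq x
    rw [mul_pow, _root_.sq_abs]
    nlinarith
  have h1 : (0:ℝ) ≤ ‖Complex.exp (x * Complex.I) - 1‖ := norm_nonneg _
  have h2 : (0:ℝ) ≤ 2 * |Real.sin (x / 2)| := by positivity
  nlinarith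

-- L2: Jordan: 2x ≤ sin(πx) for x ∈ [0, 1/2]
lemma two_mul_le_sin_pi_mul {x : ℝ} (h0 : 0 ≤ x) (h1 : x ≤ 1 / 2) :
    2 * x ≤ Real.sin (Real.pi * x) := by
  have hπ := Real.pi_pos
  have := Real.mul_le_sin (x := Real.pi * x) (by positivity)
    (by rw [div_eq_mul_inv]; nlinarith)
  calc 2 * x = 2 / Real.pi * (Real.pi * x) := by field_simp
    _ ≤ Real.sin (Real.pi * x) := this


lemma sideLobeBound_nonneg (m : ℕ) : 0 ≤ sideLobeBound m := by
  apply Real.iSup_nonneg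
  intro ν
  apply Real.iSup_nonneg
  intro hν
  rcases hν with ⟨h1, h2⟩
  have hm : (0:ℝ) ≤ (m:ℝ) := Nat.cast_nonneg m
  have hπ := Real.pi_pos
  apply div_nonneg (abs_nonneg _)
  nlinarith

lemma leakageU₂_nonneg (n g : ℕ) : 0 ≤ leakageU₂ n g :=
  Finset.sum_nonneg fun j _ => sideLobeBound_nonneg _

-- lower bound: for m ≥ 1, 1/(π(m+1)) ≤ A_m
lemma le_sideLobeBound {m : ℕ} (hm : 1 ≤ m) :
    1 / (Real.pi * ((m : ℝ) + 1)) ≤ sideLobeBound m := by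
  have hπ := Real.pi_pos
  have hm1 : (1:ℝ) ≤ (m:ℝ) := by exact_mod_cast hm
  have hrfl : sideLobeBound m = ⨆ ν : ℝ, ⨆ _ : ν ∈ Set.Icc (m : ℝ) ((m : ℝ) + 1),
      |Real.sin (Real.pi * ν)| / (Real.pi * ν) := rfl
  have hbdd : BddAbove (Set.range fun ν : ℝ => ⨆ _ : ν ∈ Set.Icc (m : ℝ) ((m : ℝ) + 1),
      |Real.sin (Real.pi * ν)| / (Real.pi * ν)) := by
    refine ⟨1, ?_⟩
    rintro x ⟨ν, rfl⟩
    by_cases hν : ν ∈ Set.Icc (m : ℝ) ((m : ℝ) + 1)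
    · have hrw : (⨆ _ : ν ∈ Set.Icc (m : ℝ) ((m : ℝ) + 1),
          |Real.sin (Real.pi * ν)| / (Real.pi * ν)) = |Real.sin (Real.pi * ν)| / (Real.pi * ν) :=
        ciSup_pos hν
      dsimp only
      rw [hrw]
      rcases hν with ⟨h1, _⟩
      have hν1 : (1:ℝ) ≤ ν := le_trans hm1 h1
      have h1s : |Real.sin (Real.pi * ν)| ≤ 1 := Real.abs_sin_le_one _
      have : (1:ℝ) ≤ Real.pi * ν := by nlinarith [Real.pi_gt_three]
      rw [div_le_one (by linarith)]
      linarith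
    · simp [hν]
  have hmem : ((m : ℝ) + 1/2) ∈ Set.Icc (m : ℝ) ((m : ℝ) + 1) := by
    constructor <;> [linarith; linarith]
  have hval : |Real.sin (Real.pi * ((m : ℝ) + 1/2))| = 1 := by
    have h0 : Real.pi * ((m : ℝ) + 1/2) = (m : ℝ) * Real.pi + Real.pi / 2 := by ring
    rw [h0, Real.sin_add, Real.sin_pi_div_two, Real.cos_pi_div_two,
      Real.sin_nat_mul_pi m]
    have : |Real.cos ((m:ℝ) * Real.pi)| = 1 := by
      exact_mod_cast Real.abs_cos_int_mul_pi (m : ℤ)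
    simpa using this
  have key : 1 / (Real.pi * ((m : ℝ) + 1)) ≤
      |Real.sin (Real.pi * ((m : ℝ) + 1/2))| / (Real.pi * ((m : ℝ) + 1/2)) := by
    rw [hval]
    apply div_le_div_of_nonneg_left (by norm_num) (by nlinarith)
    nlinarith
  refine le_trans key ?_
  rw [hrfl]
  have := le_ciSup hbdd ((m : ℝ) + 1/2)
  rw [ciSup_pos hmem] at this
  exact this

-- geometric sum bound: |∑_{t ∈ Fin n} z^(t+1)| ≤ 2 / |z - 1|
lemma abs_geom_sum_le {z : ℂ} (hz1 : ‖z‖ = 1) (hz : z ≠ 1) (n : ℕ) :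
    ‖∑ t : Fin n, z ^ ((t : ℕ) + 1)‖ ≤ 2 / ‖z - 1‖ := by
  have hzne : z - 1 ≠ 0 := sub_ne_zero.mpr hz
  have habs : (0:ℝ) < ‖z - 1‖ := by
    exact norm_pos_iff.mpr hzne
  have hsum : ∑ t : Fin n, z ^ ((t : ℕ) + 1) = z * ∑ t ∈ Finset.range n, z ^ t := by
    rw [Finset.mul_sum, Fin.sum_univ_eq_sum_range (fun t => z ^ (t + 1))]
    exact Finset.sum_congr rfl fun t _ => by ring
  rw [hsum, norm_mul, hz1, one_mul, geom_sum_eq hz]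
  rw [norm_div]
  gcongr
  calc ‖z ^ n - 1‖ ≤ ‖z ^ n‖ + ‖(1 : ℂ)‖ := by
        simpa using norm_sub_le (z ^ n) (1 : ℂ)
    _ = 2 := by rw [norm_pow, hz1]; norm_num

-- per-term leakage bound
lemma per_term_bound (n g T j' j : ℕ) (hn : 0 < n) (hg2 : 2 ≤ g) (hT : 0 < T)
    (h2gT : 2 * g * T < n) (hj' : j' < T) (hj : j < T) (hne : j ≠ j') :
    ‖(1 / (n : ℂ)) * ∑ t : Fin n,
        Complex.exp (2 * Real.pi * Complex.I * ((j : ℂ) - (j' : ℂ)) / (T : ℂ)) ^ ((t : ℕ) + 1)‖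
      ≤ Real.pi / 2 *
        sideLobeBound (2 * min (max j j' - min j j') (T - (max j j' - min j j')) * g - 1) := by
  have hπ := Real.pi_pos
  set Δ : ℕ := max j j' - min j j' with hΔ
  set d : ℕ := min Δ (T - Δ) with hd
  have hΔ1 : 1 ≤ Δ := by omega
  have hΔT : Δ < T := by omega
  have hd1 : 1 ≤ d := by omega
  have h2d : 2 * d ≤ T := by omega
  set x : ℝ := 2 * Real.pi * ((j : ℝ) - (j' : ℝ)) / T with hx
  set z : ℂ := Complex.exp (2 * Real.pi * Complex.I * ((j : ℂ) - (j' : ℂ)) / (T : ℂ)) with hz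
  have hTpos : (0:ℝ) < T := by exact_mod_cast hT
  have hzx : z = Complex.exp ((x : ℂ) * Complex.I) := by
    rw [hz, hx]
    congr 1
    push_cast
    field_simp
  have hz1 : ‖z‖ = 1 := by rw [hzx]; exact Complex.norm_exp_ofReal_mul_I x
  -- |z - 1| = 2 |sin (x/2)|
  have habs1 : ‖z - 1‖ = 2 * |Real.sin (x / 2)| := by
    rw [hzx]; exact abs_exp_mul_I_sub_one x
  -- |sin (x/2)| = |sin (π Δ / T)|
  have hxhalf : |Real.sin (x / 2)| = |Real.sin (Real.pi * (Δ : ℝ) / T)| := by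
    have : x / 2 = Real.pi * ((j : ℝ) - (j' : ℝ)) / T := by rw [hx]; ring
    rw [this]
    rcases le_or_gt j' j with hle | hlt
    · have : ((j : ℝ) - (j' : ℝ)) = (Δ : ℝ) := by
        have : Δ = j - j' := by omega
        rw [this]; push_cast [Nat.cast_sub (by omega : j' ≤ j)]; ring
      rw [this]
    · have h1 : ((j : ℝ) - (j' : ℝ)) = -(Δ : ℝ) := by
        have : Δ = j' - j := by omega
        rw [this]; push_cast [Nat.cast_sub (by omega : j ≤ j')]; ring
      rw [h1]
      rw [show Real.pi * -(Δ:ℝ) / T = -(Real.pi * (Δ:ℝ) / T) by ring, Real.sin_neg, abs_neg]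
  -- |sin(πΔ/T)| ≥ 2 d / T
  have hsin : 2 * (d : ℝ) / T ≤ |Real.sin (Real.pi * (Δ : ℝ) / T)| := by
    rcases le_or_gt (2 * Δ) T with hc | hc
    · -- d = Δ
      have hdΔ : d = Δ := by omega
      have h1 : (Δ : ℝ) / T ≤ 1 / 2 := by
        rw [div_le_div_iff₀ hTpos (by norm_num)]
        have hc' : ((2 * Δ : ℕ) : ℝ) ≤ ((T : ℕ) : ℝ) := by exact_mod_cast hc
        push_cast at hc'; linarith
      have h0 : (0:ℝ) ≤ (Δ : ℝ) / T := by positivity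
      have := two_mul_le_sin_pi_mul h0 h1
      rw [hdΔ]
      calc 2 * (Δ : ℝ) / T = 2 * ((Δ:ℝ)/T) := by ring
        _ ≤ Real.sin (Real.pi * ((Δ:ℝ)/T)) := this
        _ ≤ |Real.sin (Real.pi * ((Δ:ℝ)/T))| := le_abs_self _
        _ = |Real.sin (Real.pi * (Δ:ℝ)/T)| := by rw [mul_div_assoc]
    · -- d = T - Δ
      have hdΔ : d = T - Δ := by omega
      have heq : Real.sin (Real.pi * (Δ:ℝ)/T) = Real.sin (Real.pi * ((T:ℝ) - Δ)/T) := by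
        rw [← Real.sin_pi_sub]
        congr 1
        field_simp
      have hTd : ((d : ℝ)) = (T:ℝ) - Δ := by
        rw [hdΔ]; push_cast [Nat.cast_sub (by omega : Δ ≤ T)]; ring
      have h1 : ((T:ℝ) - Δ) / T ≤ 1 / 2 := by
        rw [div_le_div_iff₀ hTpos (by norm_num)]
        have hc' : ((T : ℕ) : ℝ) ≤ ((2 * Δ : ℕ) : ℝ) := by exact_mod_cast le_of_lt hc
        push_cast at hc'; linarith
      have h0 : (0:ℝ) ≤ ((T:ℝ) - Δ) / T := by
        apply div_nonneg _ (le_of_lt hTpos)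
        have : (Δ:ℝ) ≤ T := by exact_mod_cast le_of_lt hΔT
        linarith
      have := two_mul_le_sin_pi_mul h0 h1
      rw [heq, hTd]
      calc 2 * ((T:ℝ) - Δ) / T = 2 * (((T:ℝ) - Δ)/T) := by ring
        _ ≤ Real.sin (Real.pi * (((T:ℝ) - Δ)/T)) := this
        _ ≤ |Real.sin (Real.pi * (((T:ℝ) - Δ)/T))| := le_abs_self _
        _ = |Real.sin (Real.pi * ((T:ℝ) - Δ)/T)| := by rw [mul_div_assoc]
  have hzsub : 4 * (d : ℝ) / T ≤ ‖z - 1‖ := by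
    rw [habs1, hxhalf]
    calc 4 * (d:ℝ) / T = 2 * (2 * (d:ℝ) / T) := by ring
      _ ≤ 2 * |Real.sin (Real.pi * (Δ : ℝ) / T)| := by linarith
  have hdpos : (0:ℝ) < (d:ℝ) := by exact_mod_cast hd1
  have hzsubpos : (0:ℝ) < ‖z - 1‖ := by
    refine lt_of_lt_of_le ?_ hzsub
    positivity
  have hzne : z ≠ 1 := by
    intro h
    rw [h] at hzsubpos
    simp at hzsubpos
  -- geometric bound
  have hgeom := abs_geom_sum_le hz1 hzne n
  have hnpos : (0:ℝ) < n := by exact_mod_cast hn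
  have habsn : ‖(1 / (n : ℂ))‖ = 1 / (n : ℝ) := by
    rw [norm_div, norm_one, Complex.norm_natCast]
  have hstep : ‖(1 / (n : ℂ)) * ∑ t : Fin n, z ^ ((t : ℕ) + 1)‖
      ≤ 1 / (4 * (d:ℝ) * g) := by
    rw [norm_mul, habsn]
    have h1 : ‖∑ t : Fin n, z ^ ((t : ℕ) + 1)‖ ≤ 2 / ‖z - 1‖ := hgeom
    have h2 : 2 / ‖z - 1‖ ≤ 2 / (4 * (d:ℝ) / T) :=
      div_le_div_of_nonneg_left (by norm_num) (by positivity) hzsub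
    have hgpos : (0:ℝ) < g := by positivity
    have h2gT' : 2 * (g:ℝ) * T < n := by exact_mod_cast h2gT
    calc 1 / (n:ℝ) * ‖∑ t : Fin n, z ^ ((t : ℕ) + 1)‖
        ≤ 1 / (n:ℝ) * (2 / (4 * (d:ℝ) / T)) := by
          apply mul_le_mul_of_nonneg_left (le_trans h1 h2) (by positivity)
      _ = (T:ℝ) / (2 * n * d) := by field_simp; ring
      _ ≤ 1 / (4 * (d:ℝ) * g) := by
          rw [div_le_div_iff₀ (by positivity) (by positivity)]
          have h2dT : 2 * (d:ℝ) ≤ T := by exact_mod_cast h2d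
          nlinarith
  refine hstep.trans ?_
  -- 1/(4dg) ≤ π/2 * A_{2dg-1}
  have hm1 : 1 ≤ 2 * d * g - 1 := by
    have : 4 ≤ 2 * d * g := by nlinarith
    omega
  have hA := le_sideLobeBound hm1
  have hcast : ((2 * d * g - 1 : ℕ) : ℝ) + 1 = 2 * (d:ℝ) * g := by
    have h4 : 4 ≤ 2 * d * g := by nlinarith
    push_cast [Nat.cast_sub (by omega : 1 ≤ 2 * d * g)]
    ring
  rw [hcast] at hA
  calc 1 / (4 * (d:ℝ) * g) = Real.pi / 2 * (1 / (Real.pi * (2 * (d:ℝ) * g))) := by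
        field_simp
        ring
      _ ≤ Real.pi / 2 * sideLobeBound (2 * d * g - 1) := by
          apply mul_le_mul_of_nonneg_left hA (by positivity)

def dIdx (T j' j : ℕ) : ℕ := min (max j j' - min j j') (T - (max j j' - min j j'))

lemma leakage_sum_le (n g T j' : ℕ) (hn : 0 < n) (hg2 : 2 ≤ g) (hT : 0 < T)
    (h2gT : 2 * g * T < n) (hj' : j' < T) :
    ∑ j ∈ (Finset.range T).erase j',
        ‖(1 / (n : ℂ)) * ∑ t : Fin n,
          Complex.exp (2 * Real.pi * Complex.I * ((j : ℂ) - (j' : ℂ)) / (T : ℂ)) ^ ((t : ℕ) + 1)‖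
      ≤ Real.pi * leakageU₂ n g := by
  classical
  have hπ := Real.pi_pos
  set s : Finset ℕ := (Finset.range T).erase j' with hs
  set K : ℤ := ⌊((n : ℝ) - 1) / (4 * g)⌋ with hK
  set G : ℤ → ℝ := fun k => sideLobeBound ((2 * k).toNat * g - 1) with hG
  have hGnn : ∀ k, 0 ≤ G k := fun k => sideLobeBound_nonneg _
  have hsmem : ∀ j ∈ s, j < T ∧ j ≠ j' := by
    intro j hj
    rw [hs, Finset.mem_erase, Finset.mem_range] at hj
    exact ⟨hj.2, hj.1⟩
  -- basic facts about dIdx on s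
  have hdfacts : ∀ j ∈ s, 1 ≤ dIdx T j' j ∧ 2 * dIdx T j' j ≤ T := by
    intro j hj
    obtain ⟨hjT, hne⟩ := hsmem j hj
    unfold dIdx
    omega
  -- Step A : pointwise bound
  have hA : ∀ j ∈ s, ‖(1 / (n : ℂ)) * ∑ t : Fin n,
        Complex.exp (2 * Real.pi * Complex.I * ((j : ℂ) - (j' : ℂ)) / (T : ℂ)) ^ ((t : ℕ) + 1)‖
      ≤ Real.pi / 2 * G ((dIdx T j' j : ℤ)) := by
    intro j hj
    obtain ⟨hjT, hne⟩ := hsmem j hj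
    have := per_term_bound n g T j' j hn hg2 hT h2gT hj' hjT hne
    have h2t : ((2 * (dIdx T j' j : ℤ)).toNat) = 2 * dIdx T j' j := by omega
    have hGeq : G ((dIdx T j' j : ℤ))
        = sideLobeBound (2 * min (max j j' - min j j') (T - (max j j' - min j j')) * g - 1) := by
      simp only [hG]
      rw [h2t]
      rfl
    rw [hGeq]
    exact this
  -- maps to Icc 1 K
  have hmaps : ∀ j ∈ s, ((dIdx T j' j : ℤ)) ∈ Finset.Icc (1 : ℤ) K := by
    intro j hj
    obtain ⟨hd1, hd2⟩ := hdfacts j hj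
    rw [Finset.mem_Icc]
    constructor
    · exact_mod_cast hd1
    · rw [hK]
      apply Int.le_floor.2
      have hub : 4 * g * dIdx T j' j < n := by
        calc 4 * g * dIdx T j' j = 2 * g * (2 * dIdx T j' j) := by ring
          _ ≤ 2 * g * T := Nat.mul_le_mul_left _ hd2
          _ < n := h2gT
      have hub' : (4 * (g:ℝ) * dIdx T j' j) ≤ (n:ℝ) - 1 := by
        have : ((4 * g * dIdx T j' j : ℕ) : ℝ) + 1 ≤ (n : ℝ) := by
          exact_mod_cast Nat.succ_le_of_lt hub
        push_cast at this ⊢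
        linarith
      have hgpos : (0:ℝ) < 4 * g := by positivity
      rw [le_div_iff₀ hgpos]
      push_cast
      linarith [hub']
  -- fiber cardinality
  have hcard : ∀ k ∈ Finset.Icc (1 : ℤ) K, (s.filter (fun j => ((dIdx T j' j : ℤ)) = k)).card ≤ 2 := by
    intro k hk
    rw [Finset.mem_Icc] at hk
    set d : ℕ := k.toNat with hdk
    set a : ℕ := if j' + d < T then j' + d else j' + d - T with ha
    set bb : ℕ := if d ≤ j' then j' - d else j' + T - d with hb
    have hsub : s.filter (fun j => ((dIdx T j' j : ℤ)) = k) ⊆ ({a, bb} : Finset ℕ) := by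
      intro j hj
      rw [Finset.mem_filter] at hj
      obtain ⟨hjs, hjd⟩ := hj
      obtain ⟨hjT, hne⟩ := hsmem j hjs
      have hdj : dIdx T j' j = d := by omega
      unfold dIdx at hdj
      rw [Finset.mem_insert, Finset.mem_singleton, ha, hb]
      split_ifs <;> omega
    calc (s.filter (fun j => ((dIdx T j' j : ℤ)) = k)).card ≤ ({a, bb} : Finset ℕ).card :=
          Finset.card_le_card hsub
      _ ≤ 2 := by
          apply le_trans (Finset.card_insert_le _ _)
          simp
  -- assemble
  calc ∑ j ∈ s, ‖(1 / (n : ℂ)) * ∑ t : Fin n,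
          Complex.exp (2 * Real.pi * Complex.I * ((j : ℂ) - (j' : ℂ)) / (T : ℂ)) ^ ((t : ℕ) + 1)‖
      ≤ ∑ j ∈ s, Real.pi / 2 * G ((dIdx T j' j : ℤ)) := Finset.sum_le_sum hA
    _ = Real.pi / 2 * ∑ j ∈ s, G ((dIdx T j' j : ℤ)) := by rw [Finset.mul_sum]
    _ ≤ Real.pi / 2 * (2 * leakageU₂ n g) := by
        apply mul_le_mul_of_nonneg_left ?_ (by positivity)
        have hfib := Finset.sum_fiberwise_of_maps_to hmaps (fun j => G ((dIdx T j' j : ℤ)))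
        rw [← hfib]
        have hinner : ∀ k ∈ Finset.Icc (1 : ℤ) K,
            ∑ j ∈ s.filter (fun j => ((dIdx T j' j : ℤ)) = k), G ((dIdx T j' j : ℤ))
              ≤ 2 * G k := by
          intro k hk
          have : ∑ j ∈ s.filter (fun j => ((dIdx T j' j : ℤ)) = k), G ((dIdx T j' j : ℤ))
              = ∑ j ∈ s.filter (fun j => ((dIdx T j' j : ℤ)) = k), G k := by
            apply Finset.sum_congr rfl
            intro j hj
            rw [Finset.mem_filter] at hj
            rw [hj.2]
          rw [this, Finset.sum_const, nsmul_eq_mul]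
          apply mul_le_mul_of_nonneg_right ?_ (hGnn k)
          exact_mod_cast hcard k hk
        calc ∑ k ∈ Finset.Icc (1 : ℤ) K,
              ∑ j ∈ s.filter (fun j => ((dIdx T j' j : ℤ)) = k), G ((dIdx T j' j : ℤ))
            ≤ ∑ k ∈ Finset.Icc (1 : ℤ) K, 2 * G k := Finset.sum_le_sum hinner
          _ = 2 * leakageU₂ n g := by
              simp only [hG]
              rw [← Finset.mul_sum, hK]
              unfold leakageU₂
              rfl
    _ = Real.pi * leakageU₂ n g := by ring


/-- Pointwise lower bound on the periodogram at a present frequency: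
for every `j'` with `0 ≤ j' ≤ T−1`, `b_{j'} ≠ 0` and `j'/T ≤ 1/2`,
`|ỹ(j'/T)| ≥ |b_{j'}| − π B U₂ − sup_{v∈[0,1/2]} |ε̃(v)|`. -/
theorem periodogram_lower_bound_at_present_frequency
    {Ω : Type*} [MeasureSpace Ω] (hP : IsProbabilityMeasure (ℙ : Measure Ω))
    (n : ℕ) (hn : 0 < n) (σ : ℝ) (hσ : 0 < σ)
    (ε : Fin n → Ω → ℝ)
    (hmeas : ∀ t, Measurable (ε t))
    (hindep : iIndepFun ε ℙ)
    (hsubg : ∀ t (l : ℝ), ∫ ω, Real.exp (l * ε t ω) ∂ℙ ≤ Real.exp (σ ^ 2 * l ^ 2 / 2))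
    (εdft : ℝ → Ω → ℂ)
    (hεdft : ∀ v ω, εdft v ω = (1 / (n : ℂ)) *
        ∑ t : Fin n, (ε t ω : ℂ) * Complex.exp (-(2 * Real.pi * Complex.I * v * ((t : ℕ) + 1))))
    (g T : ℕ) (hg2 : 2 ≤ g) (hgn : Real.sqrt n ≤ g)
    (hT : 0 < T) (hTn : (T : ℝ) < n / (2 * g))
    (b : ℕ → ℂ)
    (hb0 : (b 0).im = 0)
    (hbconj : ∀ j, 1 ≤ j → j ≤ T - 1 → b j = starRingEnd ℂ (b (T - j)))
    (hbne : ∃ j < T, b j ≠ 0)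
    (μ : ℕ → ℂ)
    (hμ : ∀ t, μ t = ∑ j ∈ Finset.range T,
        b j * Complex.exp (2 * Real.pi * Complex.I * j * t / T))
    (ydft : ℝ → Ω → ℂ)
    (hydft : ∀ v ω, ydft v ω = (1 / (n : ℂ)) *
        ∑ t : Fin n, (μ ((t : ℕ) + 1) + (ε t ω : ℂ)) *
          Complex.exp (-(2 * Real.pi * Complex.I * v * ((t : ℕ) + 1))))
    (B : ℝ) (hB : IsGreatest {x : ℝ | ∃ j < T, b j ≠ 0 ∧ x = ‖b j‖} B) :
    ∀ ω : Ω, ∀ j' : ℕ, j' < T → b j' ≠ 0 → (j' : ℝ) / T ≤ 1 / 2 →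
      ‖b j'‖ - Real.pi * B * leakageU₂ n g -
          (⨆ v ∈ Set.Icc (0 : ℝ) (1 / 2), ‖εdft v ω‖) ≤
        ‖ydft ((j' : ℝ) / T) ω‖ := by
  intro ω j' hj'T hbj' hhalf
  classical
  have hπ := Real.pi_pos
  have hTpos : (0:ℝ) < T := by exact_mod_cast hT
  have hnpos : (0:ℝ) < n := by exact_mod_cast hn
  have hnne : (n : ℂ) ≠ 0 := Nat.cast_ne_zero.2 hn.ne'
  set v : ℝ := (j' : ℝ) / T with hv
  -- B facts
  have hBnn : 0 ≤ B := by
    obtain ⟨⟨j, hj, hbj, hx⟩, _⟩ := hB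
    rw [hx]; exact norm_nonneg _
  have hBub : ∀ j, j < T → b j ≠ 0 → ‖b j‖ ≤ B := by
    intro j hj hbj
    exact hB.2 ⟨j, hj, hbj, rfl⟩
  -- 2 g T < n
  have h2gT : 2 * g * T < n := by
    have hgpos : (0:ℝ) < 2 * g := by positivity
    have h2 : (T : ℝ) * (2 * g) < n := (lt_div_iff₀ hgpos).1 hTn
    have : ((2 * g * T : ℕ) : ℝ) < (n : ℝ) := by push_cast; linarith
    exact_mod_cast this
  -- main body
  set z : ℕ → ℂ := fun j =>
    Complex.exp (2 * Real.pi * Complex.I * ((j : ℂ) - (j' : ℂ)) / (T : ℂ)) with hzdef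
  set μhat : ℂ := (1 / (n : ℂ)) * ∑ t : Fin n, μ ((t : ℕ) + 1) *
      Complex.exp (-(2 * Real.pi * Complex.I * v * ((t : ℕ) + 1))) with hμhat
  have hTne : (T : ℂ) ≠ 0 := Nat.cast_ne_zero.2 hT.ne'
  -- split ydft
  have hsplit : ydft v ω = μhat + εdft v ω := by
    rw [hydft v ω, hεdft v ω, hμhat, ← mul_add, ← Finset.sum_add_distrib]
    congr 1
    apply Finset.sum_congr rfl
    intro t _
    ring
  -- μhat as a sum over frequencies
  have hμsum : μhat = ∑ j ∈ Finset.range T,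
      b j * ((1 / (n : ℂ)) * ∑ t : Fin n, z j ^ ((t : ℕ) + 1)) := by
    rw [hμhat]
    have h1 : ∀ t : Fin n, μ ((t : ℕ) + 1) *
        Complex.exp (-(2 * Real.pi * Complex.I * v * ((t : ℕ) + 1)))
        = ∑ j ∈ Finset.range T, b j * z j ^ ((t : ℕ) + 1) := by
      intro t
      rw [hμ ((t : ℕ) + 1), Finset.sum_mul]
      apply Finset.sum_congr rfl
      intro j _
      have hzp : z j ^ ((t : ℕ) + 1)
          = Complex.exp ((((t : ℕ) + 1 : ℕ) : ℂ) *
            (2 * Real.pi * Complex.I * ((j : ℂ) - (j' : ℂ)) / (T : ℂ))) := by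
        simp only [hzdef]
        exact (Complex.exp_nat_mul _ _).symm
      rw [mul_assoc, ← Complex.exp_add, hzp]
      congr 2
      rw [hv]
      push_cast
      field_simp
      ring
    calc (1 / (n : ℂ)) * ∑ t : Fin n, μ ((t : ℕ) + 1) *
          Complex.exp (-(2 * Real.pi * Complex.I * v * ((t : ℕ) + 1)))
        = (1 / (n : ℂ)) * ∑ t : Fin n, ∑ j ∈ Finset.range T, b j * z j ^ ((t : ℕ) + 1) := by
          rw [Finset.sum_congr rfl fun t _ => h1 t]
      _ = (1 / (n : ℂ)) * ∑ j ∈ Finset.range T, ∑ t : Fin n, b j * z j ^ ((t : ℕ) + 1) := by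
          rw [Finset.sum_comm]
      _ = ∑ j ∈ Finset.range T, b j * ((1 / (n : ℂ)) * ∑ t : Fin n, z j ^ ((t : ℕ) + 1)) := by
          rw [Finset.mul_sum]
          apply Finset.sum_congr rfl
          intro j _
          rw [← Finset.mul_sum]
          ring
  -- diagonal term
  have hDj' : (1 / (n : ℂ)) * ∑ t : Fin n, z j' ^ ((t : ℕ) + 1) = 1 := by
    have hz1 : z j' = 1 := by
      simp only [hzdef]
      simp
    rw [hz1]
    simp only [one_pow, Finset.sum_const, Finset.card_univ, Fintype.card_fin, nsmul_eq_mul,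
      mul_one]
    field_simp
  have hsum_split : ∑ j ∈ Finset.range T,
      b j * ((1 / (n : ℂ)) * ∑ t : Fin n, z j ^ ((t : ℕ) + 1))
      = b j' + ∑ j ∈ (Finset.range T).erase j',
          b j * ((1 / (n : ℂ)) * ∑ t : Fin n, z j ^ ((t : ℕ) + 1)) := by
    rw [← Finset.add_sum_erase _ _ (Finset.mem_range.2 hj'T), hDj', mul_one]
  -- leakage bound
  have hleak : ∑ j ∈ (Finset.range T).erase j',
      ‖b j * ((1 / (n : ℂ)) * ∑ t : Fin n, z j ^ ((t : ℕ) + 1))‖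
      ≤ Real.pi * B * leakageU₂ n g := by
    have hsum := leakage_sum_le n g T j' hn hg2 hT h2gT hj'T
    calc ∑ j ∈ (Finset.range T).erase j',
          ‖b j * ((1 / (n : ℂ)) * ∑ t : Fin n, z j ^ ((t : ℕ) + 1))‖
        ≤ ∑ j ∈ (Finset.range T).erase j',
          B * ‖(1 / (n : ℂ)) * ∑ t : Fin n, z j ^ ((t : ℕ) + 1)‖ := by
          apply Finset.sum_le_sum
          intro j hj
          rw [norm_mul]
          by_cases hbj : b j = 0
          · rw [hbj]
            simp only [norm_zero, zero_mul]
            positivity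
          · apply mul_le_mul_of_nonneg_right ?_ (norm_nonneg _)
            exact hBub j (Finset.mem_range.1 (Finset.mem_of_mem_erase hj)) hbj
      _ = B * ∑ j ∈ (Finset.range T).erase j',
            ‖(1 / (n : ℂ)) * ∑ t : Fin n, z j ^ ((t : ℕ) + 1)‖ := by
          rw [Finset.mul_sum]
      _ ≤ B * (Real.pi * leakageU₂ n g) := by
          apply mul_le_mul_of_nonneg_left ?_ hBnn
          simpa only [hzdef] using hsum
      _ = Real.pi * B * leakageU₂ n g := by ring
  -- sup bound on noise
  have hvmem : v ∈ Set.Icc (0:ℝ) (1/2) := ⟨by positivity, hhalf⟩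
  set M : ℝ := (1 / (n : ℝ)) * ∑ t : Fin n, |ε t ω| with hM
  have hεbound : ∀ u : ℝ, ‖εdft u ω‖ ≤ M := by
    intro u
    rw [hεdft u ω, hM, norm_mul]
    have h1 : ‖1 / (n : ℂ)‖ = 1 / (n : ℝ) := by
      rw [norm_div, norm_one, Complex.norm_natCast]
    rw [h1]
    apply mul_le_mul_of_nonneg_left ?_ (by positivity)
    calc ‖∑ t : Fin n, (ε t ω : ℂ) *
          Complex.exp (-(2 * Real.pi * Complex.I * u * ((t : ℕ) + 1)))‖
        ≤ ∑ t : Fin n, ‖(ε t ω : ℂ) *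
          Complex.exp (-(2 * Real.pi * Complex.I * u * ((t : ℕ) + 1)))‖ :=
          norm_sum_le _ _
      _ = ∑ t : Fin n, |ε t ω| := by
          apply Finset.sum_congr rfl
          intro t _
          rw [norm_mul, Complex.norm_real, Real.norm_eq_abs]
          have hexp : -(2 * (Real.pi : ℂ) * Complex.I * u * ((t : ℕ) + 1))
              = ((-(2 * Real.pi * u * ((t : ℕ) + 1)) : ℝ) : ℂ) * Complex.I := by
            push_cast
            ring
          rw [hexp, Complex.norm_exp_ofReal_mul_I, mul_one]
  have hsup : ‖εdft v ω‖ ≤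
      ⨆ u ∈ Set.Icc (0:ℝ) (1/2), ‖εdft u ω‖ := by
    have hbdd : BddAbove (Set.range fun u : ℝ =>
        ⨆ _ : u ∈ Set.Icc (0:ℝ) (1/2), ‖εdft u ω‖) := by
      refine ⟨max M 0, ?_⟩
      rintro x ⟨u, rfl⟩
      by_cases hu : u ∈ Set.Icc (0:ℝ) (1/2)
      · have hrw : (⨆ _ : u ∈ Set.Icc (0:ℝ) (1/2), ‖εdft u ω‖)
            = ‖εdft u ω‖ := ciSup_pos hu
        dsimp only
        rw [hrw]
        exact le_max_of_le_left (hεbound u)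
      · dsimp only
        have hz0 : (⨆ _ : u ∈ Set.Icc (0:ℝ) (1/2), ‖εdft u ω‖) = 0 := by
          haveI : IsEmpty (u ∈ Set.Icc (0:ℝ) (1/2)) := ⟨hu⟩
          rw [iSup, Set.range_eq_empty, Real.sSup_empty]
        rw [hz0]
        exact le_max_right _ _
    have h := le_ciSup hbdd v
    rw [ciSup_pos hvmem] at h
    exact h
  -- triangle inequalities and conclusion
  have h1 : ‖μhat‖ ≤ ‖ydft v ω‖ + ‖εdft v ω‖ := by
    rw [hsplit]
    calc ‖μhat‖ = ‖μhat + εdft v ω - εdft v ω‖ := by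
          congr 1
          ring
      _ ≤ ‖μhat + εdft v ω‖ + ‖εdft v ω‖ := by
          simpa using norm_sub_le (μhat + εdft v ω) (εdft v ω)
  have h2 : ‖b j'‖ - Real.pi * B * leakageU₂ n g ≤ ‖μhat‖ := by
    rw [hμsum, hsum_split]
    set S : ℂ := ∑ j ∈ (Finset.range T).erase j',
        b j * ((1 / (n : ℂ)) * ∑ t : Fin n, z j ^ ((t : ℕ) + 1)) with hS
    have htri : ‖b j'‖ - ‖S‖ ≤ ‖b j' + S‖ := by
      have h0 : ‖b j'‖ ≤ ‖b j' + S‖ + ‖S‖ := by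
        calc ‖b j'‖ = ‖(b j' + S) - S‖ := by
              congr 1
              ring
          _ ≤ _ := by simpa using norm_sub_le (b j' + S) S
      linarith
    have habsS : ‖S‖ ≤ Real.pi * B * leakageU₂ n g := by
      refine le_trans (norm_sum_le _ _) hleak
    linarith
  linarith [hsup, h1, h2]
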